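/- Let θ > 0 and let y : ℝ → ℝ be differentiable on [0, ∞) with y'(t) = y(t)·(θ² − y(t)²) for all t ≥ 0 and y(0) > 0. Then y(t) tends to θ as t → ∞. -/

import Mathlib

open Set Filter MeasureTheory intervalIntegral Real

theorem stmt_14 (θ : ℝ) (hθ : 0 < θ) (y : ℝ → ℝ)
    (hy : ∀ t ≥ (0:ℝ), HasDerivAt y (y t * (θ ^ 2 - (y t) ^ 2)) t)
    (h0 : 0 < y 0) :
    Filter.Tendsto y Filter.atTop (nhds θ) := by
  have hycont : ∀ t ≥ (0:ℝ), ContinuousAt y t := fun t ht => (hy t ht).continuousAt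
  have hyc : ContinuousOn y (Ici 0) := fun t ht => (hycont t ht).continuousWithinAt
  set f : ℝ → ℝ := fun s => θ ^ 2 - y s ^ 2 with hfdef
  have hfc : ContinuousOn f (Ici 0) := by
    exact continuousOn_const.sub ((hyc.pow 2))
  set g : ℝ → ℝ := fun t => ∫ s in (0:ℝ)..t, f s with hgdef
  -- integrability
  have hint : ∀ t ≥ (0:ℝ), IntervalIntegrable f volume 0 t := by
    intro t ht
    exact (hfc.mono (by rw [Set.uIcc_of_le ht]; exact Icc_subset_Ici_self)).intervalIntegrable
  -- derivative of g from the right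
  have hg' : ∀ x ≥ (0:ℝ), HasDerivWithinAt g (f x) (Ici x) x := by
    intro x hx
    have hmeas : StronglyMeasurableAtFilter f (nhdsWithin x (Ioi x)) volume := by
      refine ⟨Ici 0, ?_, hfc.aestronglyMeasurable measurableSet_Ici⟩
      exact Filter.mem_of_superset self_mem_nhdsWithin
        (fun s hs => le_trans hx (le_of_lt hs))
    exact integral_hasDerivWithinAt_right (hint x hx) hmeas
      ((hfc x hx).mono (Ioi_subset_Ici hx))
  -- Step 1: positivity of y on [0, ∞)
  have hpos : ∀ t ≥ (0:ℝ), 0 < y t := by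
    intro T hT
    set F : ℝ → ℝ := fun t => y t * Real.exp (-(g t)) with hFdef
    have hgc : ContinuousOn g (Icc 0 T) := by
      have := continuousOn_primitive_interval' (μ := volume) (hint T hT)
        (a := 0) (by rw [Set.uIcc_of_le hT]; exact Set.left_mem_Icc.mpr hT)
      rwa [Set.uIcc_of_le hT] at this
    have hFc : ContinuousOn F (Icc 0 T) := by
      refine ContinuousOn.mul (hyc.mono Icc_subset_Ici_self) ?_
      exact Real.continuous_exp.comp_continuousOn hgc.neg
    have hF' : ∀ x ∈ Ico (0:ℝ) T, HasDerivWithinAt F 0 (Ici x) x := by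
      intro x hx
      have h1 : HasDerivWithinAt y (y x * (θ ^ 2 - y x ^ 2)) (Ici x) x :=
        (hy x hx.1).hasDerivWithinAt
      have h2 : HasDerivWithinAt (fun t => Real.exp (-(g t)))
          (Real.exp (-(g x)) * -(f x)) (Ici x) x := ((hg' x hx.1).neg).exp
      have := h1.mul h2
      refine this.congr_deriv ?_
      simp only [hfdef]
      ring
    have key := constant_of_has_deriv_right_zero hFc hF' T (by constructor <;> linarith)
    have hexp : (0:ℝ) < Real.exp (-(g T)) := Real.exp_pos _
    have hg0 : g 0 = 0 := by simp [hgdef]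
    have : y T * Real.exp (-(g T)) = y 0 := by
      simpa [hFdef, hg0] using key
    nlinarith [Real.exp_pos (-(g T))]
  -- Step 2: u is constant
  set c : ℝ := (y 0 ^ 2)⁻¹ - (θ ^ 2)⁻¹ with hcdef
  set u : ℝ → ℝ := fun t => ((y t ^ 2)⁻¹ - (θ ^ 2)⁻¹) * Real.exp (2 * θ ^ 2 * t) with hudef
  have hu' : ∀ x ≥ (0:ℝ), HasDerivAt u 0 x := by
    intro x hx
    have hyx : y x ≠ 0 := ne_of_gt (hpos x hx)
    have h1 : HasDerivAt (fun t => y t ^ 2) (2 * y x ^ (2-1) * (y x * (θ ^ 2 - y x ^ 2))) x := by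
      exact (hy x hx).pow 2
    have h2 : HasDerivAt (fun t => (y t ^ 2)⁻¹)
        (-(2 * y x ^ (2-1) * (y x * (θ ^ 2 - y x ^ 2))) / (y x ^ 2) ^ 2) x :=
      h1.inv (pow_ne_zero 2 hyx)
    have h3 : HasDerivAt (fun t : ℝ => Real.exp (2 * θ ^ 2 * t))
        (Real.exp (2 * θ ^ 2 * x) * (2 * θ ^ 2)) x := by
      have := (hasDerivAt_id x).const_mul (2 * θ ^ 2)
      simpa using (this.exp)
    have h4 := (h2.sub_const ((θ ^ 2)⁻¹)).mul h3
    refine h4.congr_deriv ?_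
    have hy2 : y x ^ 2 ≠ 0 := pow_ne_zero 2 hyx
    field_simp
    ring
  have huconst : ∀ t ≥ (0:ℝ), u t = c := by
    intro T hT
    have hcont : ContinuousOn u (Icc 0 T) := by
      intro x hx
      exact ((hu' x hx.1).continuousAt).continuousWithinAt
    have hderiv : ∀ x ∈ Ico (0:ℝ) T, HasDerivWithinAt u 0 (Ici x) x :=
      fun x hx => (hu' x hx.1).hasDerivWithinAt
    have key := constant_of_has_deriv_right_zero hcont hderiv T (by constructor <;> linarith)
    simpa [hudef, hcdef] using key
  -- Step 3: explicit formula and limit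
  have hform : ∀ t ≥ (0:ℝ), (y t ^ 2)⁻¹ = (θ ^ 2)⁻¹ + c * Real.exp (-(2 * θ ^ 2 * t)) := by
    intro t ht
    have h := huconst t ht
    have hexp : Real.exp (2 * θ ^ 2 * t) ≠ 0 := (Real.exp_pos _).ne'
    rw [hudef] at h
    simp only at h
    have h2 : (y t ^ 2)⁻¹ - (θ ^ 2)⁻¹ = c * (Real.exp (2 * θ ^ 2 * t))⁻¹ :=
      (eq_mul_inv_iff_mul_eq₀ hexp).mpr h
    rw [Real.exp_neg]
    linarith
  have hθ2 : (θ:ℝ) ^ 2 ≠ 0 := pow_ne_zero 2 hθ.ne'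
  -- (y t)⁻² → θ⁻²
  have hlim1 : Tendsto (fun t => (y t ^ 2)⁻¹) atTop (nhds ((θ ^ 2)⁻¹)) := by
    have hexp : Tendsto (fun t : ℝ => Real.exp (-(2 * θ ^ 2 * t))) atTop (nhds 0) := by
      have : Tendsto (fun t : ℝ => -(2 * θ ^ 2 * t)) atTop atBot := by
        apply Filter.tendsto_neg_atBot_iff.mpr
        exact Tendsto.const_mul_atTop (by positivity) tendsto_id
      exact Real.tendsto_exp_atBot.comp this
    have : Tendsto (fun t => (θ ^ 2)⁻¹ + c * Real.exp (-(2 * θ ^ 2 * t))) atTop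
        (nhds ((θ ^ 2)⁻¹ + c * 0)) :=
      tendsto_const_nhds.add (tendsto_const_nhds.mul hexp)
    rw [mul_zero, add_zero] at this
    refine this.congr' ?_
    filter_upwards [eventually_ge_atTop (0:ℝ)] with t ht
    exact (hform t ht).symm
  have hlim2 : Tendsto (fun t => y t ^ 2) atTop (nhds (θ ^ 2)) := by
    have := hlim1.inv₀ (inv_ne_zero hθ2)
    simpa using this
  -- y t = sqrt (y t ^ 2) eventually, and sqrt is continuous
  have hsqrt : Tendsto (fun t => Real.sqrt (y t ^ 2)) atTop (nhds θ) := by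
    have hc : Tendsto Real.sqrt (nhds (θ ^ 2)) (nhds (Real.sqrt (θ ^ 2))) :=
      Real.continuous_sqrt.continuousAt
    have := hc.comp hlim2
    rwa [Real.sqrt_sq hθ.le] at this
  refine hsqrt.congr' ?_
  filter_upwards [eventually_ge_atTop (0:ℝ)] with t ht
  exact Real.sqrt_sq (hpos t ht).le
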